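/- Let A be a commutative Q-algebra and let a, b, c be nilpotent elements of A such that (1-a)*(1-b)*(1-c) = 1. Then the (finite) sums satisfy Σ_{m≥1} a^m/m + Σ_{m≥1} b^m/m + Σ_{m≥1} c^m/m = 0. -/

import Mathlib

open Finset Polynomial

section Aux

variable {A : Type*} [CommRing A] [Algebra ℚ A]

/-- Truncated exponential. -/
noncomputable def cexp (x : A) (n : ℕ) : A :=
  ∑ k ∈ range n, ((k.factorial : ℚ))⁻¹ • x ^ k

/-- Truncated logarithm `-log(1-x)`. -/
noncomputable def clog (x : A) (n : ℕ) : A :=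
  ∑ m ∈ Finset.Icc 1 n, ((m : ℚ)⁻¹) • x ^ m

lemma clog_factor (x : A) (n : ℕ) :
    clog x n = x * ∑ m ∈ Finset.Icc 1 n, ((m : ℚ)⁻¹) • x ^ (m - 1) := by
  rw [clog, Finset.mul_sum]
  refine Finset.sum_congr rfl fun m hm => ?_
  have h1 : 1 ≤ m := (Finset.mem_Icc.mp hm).1
  have h2 : m - 1 + 1 = m := by omega
  rw [mul_smul_comm, ← pow_succ', h2]

lemma clog_pow_eq_zero {x : A} {n : ℕ} (hx : x ^ n = 0) : (clog x n) ^ n = 0 := by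
  rw [clog_factor, mul_pow, hx, zero_mul]

/-- range extension for `cexp` when the argument is nilpotent. -/
lemma cexp_ext {z : A} {p n n' : ℕ} (hz : z ^ p = 0) (h1 : p ≤ n) (h2 : n ≤ n') :
    cexp z n' = cexp z n := by
  rw [cexp, cexp]
  refine (Finset.sum_subset (Finset.range_subset_range.mpr h2) fun k _ hk => ?_).symm
  rw [Finset.mem_range, not_lt] at hk
  rw [pow_eq_zero_of_le (le_trans h1 hk) hz, smul_zero]

/-- Cauchy-product / binomial: truncated exponentials multiply. -/
lemma cexp_add {x y : A} {p q : ℕ} (hx : x ^ p = 0) (hy : y ^ q = 0)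
    {n : ℕ} (hn : p + q ≤ n) :
    cexp x n * cexp y n = cexp (x + y) n := by
  rcases Nat.eq_zero_or_pos n with rfl | hnpos
  · simp [cexp]
  rw [cexp, cexp, Finset.sum_mul_sum]
  have key : ∀ i j : ℕ, ((i.factorial : ℚ))⁻¹ • x ^ i * ((j.factorial : ℚ))⁻¹ • y ^ j
      = (((i.factorial : ℚ))⁻¹ * ((j.factorial : ℚ))⁻¹) • (x ^ i * y ^ j) := by
    intro i j; rw [smul_mul_smul_comm]
  simp_rw [key]
  rw [← Finset.sum_product']
  rw [← Finset.sum_fiberwise_of_maps_to (t := range (2 * n)) (g := fun ij => ij.1 + ij.2)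
    (fun ij hp => by
      simp only [Finset.mem_product, Finset.mem_range] at hp
      simp only [Finset.mem_range]; omega)]
  have hsplit : range (2 * n) = Finset.Ico 0 (2 * n) := by rw [← Finset.range_eq_Ico]
  rw [hsplit, ← Finset.sum_Ico_consecutive _ (Nat.zero_le n) (by omega),
    ← Finset.range_eq_Ico]
  have hzero : ∑ m ∈ Finset.Ico n (2 * n), ∑ ij ∈ (range n ×ˢ range n).filter
      (fun ij => ij.1 + ij.2 = m), (((ij.1.factorial : ℚ))⁻¹ * ((ij.2.factorial : ℚ))⁻¹)
        • (x ^ ij.1 * y ^ ij.2) = 0 := by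
    refine Finset.sum_eq_zero fun m hm => Finset.sum_eq_zero fun ij hp => ?_
    rw [Finset.mem_Ico] at hm
    rw [Finset.mem_filter] at hp
    have hpm : ij.1 + ij.2 = m := hp.2
    have hz : x ^ ij.1 * y ^ ij.2 = 0 := by
      rcases le_or_gt p ij.1 with h1 | h1
      · rw [pow_eq_zero_of_le h1 hx, zero_mul]
      · have h2 : q ≤ ij.2 := by omega
        rw [pow_eq_zero_of_le h2 hy, mul_zero]
    rw [hz, smul_zero]
  rw [hzero, add_zero, cexp]
  refine Finset.sum_congr rfl fun m hm => ?_
  rw [Finset.mem_range] at hm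
  have hfib : (range n ×ˢ range n).filter (fun ij => ij.1 + ij.2 = m)
      = Finset.HasAntidiagonal.antidiagonal m := by
    ext ij
    simp only [Finset.mem_filter, Finset.mem_product, Finset.mem_range,
      Finset.HasAntidiagonal.mem_antidiagonal]
    constructor
    · exact fun h => h.2
    · intro h; exact ⟨⟨by omega, by omega⟩, h⟩
  rw [hfib, Commute.add_pow' (Commute.all x y) m, Finset.smul_sum]
  refine Finset.sum_congr rfl fun ij hp => ?_
  rw [Finset.HasAntidiagonal.mem_antidiagonal] at hp
  rw [← Nat.cast_smul_eq_nsmul ℚ, smul_smul]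
  congr 1
  have h1 : (ij.1.factorial : ℚ) ≠ 0 := Nat.cast_ne_zero.mpr ij.1.factorial_ne_zero
  have h2 : (ij.2.factorial : ℚ) ≠ 0 := Nat.cast_ne_zero.mpr ij.2.factorial_ne_zero
  have h3 : (m.factorial : ℚ) ≠ 0 := Nat.cast_ne_zero.mpr m.factorial_ne_zero
  rw [Nat.cast_choose ℚ (by omega : ij.1 ≤ m)]
  have h4 : m - ij.1 = ij.2 := by omega
  rw [h4]
  field_simp



section Poly

noncomputable def Lp (N : ℕ) : Polynomial ℚ :=
  ∑ m ∈ Finset.Icc 1 N, Polynomial.C ((m : ℚ)⁻¹) * Polynomial.X ^ m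

noncomputable def Fp (N : ℕ) : Polynomial ℚ :=
  ∑ k ∈ range (N + 1), Polynomial.C ((k.factorial : ℚ))⁻¹ * (Lp N) ^ k

lemma derivative_Lp (N : ℕ) :
    derivative (Lp N) = ∑ m ∈ Finset.Icc 1 N, (Polynomial.X : Polynomial ℚ) ^ (m - 1) := by
  rw [Lp, map_sum]
  refine Finset.sum_congr rfl fun m hm => ?_
  rw [derivative_C_mul_X_pow]
  have h1 : 1 ≤ m := (Finset.mem_Icc.mp hm).1
  have h2 : ((m : ℚ)⁻¹ * m) = 1 := by
    field_simp
  rw [h2, Polynomial.C_1, one_mul]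

lemma X_dvd_Lp (N : ℕ) : Polynomial.X ∣ Lp N := by
  refine Finset.dvd_sum fun m hm => ?_
  have h1 : 1 ≤ m := (Finset.mem_Icc.mp hm).1
  exact Dvd.dvd.mul_left (dvd_pow_self _ (by omega)) _

lemma one_sub_mul_derivative_Lp (N : ℕ) :
    (1 - Polynomial.X) * derivative (Lp N) = 1 - Polynomial.X ^ N := by
  rw [derivative_Lp]
  have hre : ∑ m ∈ Finset.Icc 1 N, (Polynomial.X : Polynomial ℚ) ^ (m - 1)
      = ∑ i ∈ range N, (Polynomial.X : Polynomial ℚ) ^ i := by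
    rw [← Finset.Ico_add_one_right_eq_Icc, Finset.sum_Ico_eq_sum_range]
    simp
  rw [hre]
  linear_combination -geom_sum_mul (Polynomial.X : Polynomial ℚ) N

lemma derivative_Fp (N : ℕ) :
    derivative (Fp N) = derivative (Lp N) *
      (Fp N - Polynomial.C ((N.factorial : ℚ))⁻¹ * (Lp N) ^ N) := by
  rw [Fp, map_sum]
  have step : ∀ k ∈ range (N + 1),
      derivative (Polynomial.C ((k.factorial : ℚ))⁻¹ * (Lp N) ^ k)
        = Polynomial.C ((k.factorial : ℚ))⁻¹ * (Polynomial.C (k : ℚ) * (Lp N) ^ (k - 1)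
            * derivative (Lp N)) := by
    intro k _
    rw [derivative_C_mul, derivative_pow]
  rw [Finset.sum_congr rfl step, Finset.sum_range_succ']
  have h0 : Polynomial.C ((Nat.factorial 0 : ℚ))⁻¹ * (Polynomial.C ((0 : ℕ) : ℚ)
      * (Lp N) ^ (0 - 1) * derivative (Lp N)) = 0 := by
    simp
  rw [h0, add_zero]
  have step2 : ∀ k ∈ range N,
      Polynomial.C (((k + 1).factorial : ℚ))⁻¹ * (Polynomial.C ((k + 1 : ℕ) : ℚ)
          * (Lp N) ^ (k + 1 - 1) * derivative (Lp N))
        = Polynomial.C ((k.factorial : ℚ))⁻¹ * (Lp N) ^ k * derivative (Lp N) := by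
    intro k _
    have hc : (((k + 1).factorial : ℚ))⁻¹ * ((k + 1 : ℕ) : ℚ) = ((k.factorial : ℚ))⁻¹ := by
      rw [Nat.factorial_succ]
      push_cast
      rw [mul_comm ((k : ℚ) + 1)]
      rw [mul_inv]
      field_simp
    rw [Nat.add_sub_cancel, ← mul_assoc, ← mul_assoc, ← Polynomial.C_mul, hc]
  rw [Finset.sum_congr rfl step2, ← Finset.sum_mul]
  have hsum : ∑ k ∈ range N, Polynomial.C ((k.factorial : ℚ))⁻¹ * (Lp N) ^ k
      = Fp N - Polynomial.C ((N.factorial : ℚ))⁻¹ * (Lp N) ^ N := by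
    rw [Fp, Finset.sum_range_succ]
    ring
  rw [hsum, mul_comm, Fp]

lemma key_poly (N : ℕ) :
    Polynomial.X ^ (N + 1) ∣ Fp N * (1 - Polynomial.X) - 1 := by
  set G : Polynomial ℚ := Fp N * (1 - Polynomial.X) - 1 with hG
  set T : Polynomial ℚ := Polynomial.C ((N.factorial : ℚ))⁻¹ * (Lp N) ^ N with hT
  have hdG : derivative G = -T - Polynomial.X ^ N * (Fp N - T) := by
    rw [hG]
    simp only [derivative_sub, derivative_mul, derivative_one, derivative_X, derivative_Fp]
    linear_combination (Fp N - T) * one_sub_mul_derivative_Lp N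
  have hdvd : Polynomial.X ^ N ∣ derivative G := by
    rw [hdG]
    have h1 : Polynomial.X ^ N ∣ T := by
      rw [hT]
      exact Dvd.dvd.mul_left (pow_dvd_pow_of_dvd (X_dvd_Lp N) N) _
    exact dvd_sub h1.neg_right (Dvd.dvd.mul_right (dvd_refl _) _)
  have hL0 : (Lp N).eval 0 = 0 := by
    rw [Lp, Polynomial.eval_finset_sum]
    refine Finset.sum_eq_zero fun m hm => ?_
    have h1 : 1 ≤ m := (Finset.mem_Icc.mp hm).1
    simp [zero_pow (by omega : m ≠ 0)]
  have hF0 : (Fp N).eval 0 = 1 := by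
    rw [Fp, Finset.sum_range_succ', Polynomial.eval_add, Polynomial.eval_finset_sum]
    have : ∀ k ∈ range N, ((Polynomial.C (((k+1).factorial : ℚ))⁻¹ * Lp N ^ (k+1)).eval 0)
        = 0 := by
      intro k _
      simp [hL0]
    rw [Finset.sum_congr rfl this]
    simp
  have h0 : G.coeff 0 = 0 := by
    rw [Polynomial.coeff_zero_eq_eval_zero, hG]
    simp [hF0]
  rw [Polynomial.X_pow_dvd_iff]
  intro d hd
  match d with
  | 0 => exact h0
  | (e + 1) =>
    have he : e < N := by omega
    have hc : (derivative G).coeff e = 0 := by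
      rw [Polynomial.X_pow_dvd_iff] at hdvd
      exact hdvd e he
    rw [Polynomial.coeff_derivative] at hc
    rcases mul_eq_zero.mp hc with h | h
    · exact h
    · exact absurd h (by positivity)

end Poly

lemma cexp_clog {x : A} {N : ℕ} (hx : x ^ N = 0) :
    cexp (clog x N) (N + 1) * (1 - x) = 1 := by
  obtain ⟨H, hH⟩ := key_poly N
  have hL : Polynomial.aeval x (Lp N) = clog x N := by
    rw [Lp, clog, map_sum]
    refine Finset.sum_congr rfl fun m hm => ?_
    rw [map_mul, map_pow, Polynomial.aeval_C, Polynomial.aeval_X, Algebra.smul_def]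
  have hF : Polynomial.aeval x (Fp N) = cexp (clog x N) (N + 1) := by
    rw [Fp, cexp, map_sum]
    refine Finset.sum_congr rfl fun k _ => ?_
    rw [map_mul, map_pow, Polynomial.aeval_C, hL, Algebra.smul_def]
  have := congrArg (Polynomial.aeval x) hH
  simp only [map_sub, map_mul, map_pow, map_one, Polynomial.aeval_X, hF] at this
  have hx1 : x ^ (N + 1) = 0 := by rw [pow_succ, hx, zero_mul]
  rw [hx1, zero_mul] at this
  exact sub_eq_zero.mp this

lemma cexp_eq_one_imp {z : A} {k : ℕ} (hz : z ^ k = 0)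
    (h1 : cexp z (k + 1) = 1) : z = 0 := by
  rcases Nat.eq_zero_or_pos k with rfl | hk
  · have h10 : (1 : A) = 0 := by simpa using hz
    rw [← mul_one z, h10, mul_zero]
  · obtain ⟨k', rfl⟩ : ∃ k', k = k' + 1 := ⟨k - 1, by omega⟩
    rw [cexp, Finset.sum_range_succ'] at h1
    simp only [pow_zero, Nat.factorial_zero, Nat.cast_one, inv_one, one_smul] at h1
    have hS : ∑ j ∈ range (k' + 1), (((j + 1).factorial : ℚ))⁻¹ • z ^ (j + 1) = 0 := by
      have := congrArg (fun t => t - 1) h1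
      simpa using this
    have hfac : ∑ j ∈ range (k' + 1), (((j + 1).factorial : ℚ))⁻¹ • z ^ (j + 1)
        = z * ∑ j ∈ range (k' + 1), (((j + 1).factorial : ℚ))⁻¹ • z ^ j := by
      rw [Finset.mul_sum]
      refine Finset.sum_congr rfl fun j _ => ?_
      rw [mul_smul_comm, ← pow_succ']
    set U : A := ∑ j ∈ range (k' + 1), (((j + 1).factorial : ℚ))⁻¹ • z ^ j with hU
    have hzU : z * U = 0 := by rw [← hfac]; exact hS
    have hUunit : IsUnit U := by
      have hU1 : U = 1 + ∑ j ∈ range k', (((j + 1 + 1).factorial : ℚ))⁻¹ • z ^ (j + 1) := by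
        rw [hU, Finset.sum_range_succ']
        simp only [zero_add, pow_zero, Nat.factorial_one, Nat.cast_one, inv_one, one_smul]
        rw [add_comm]
      have hnil : IsNilpotent (∑ j ∈ range k', (((j + 1 + 1).factorial : ℚ))⁻¹ • z ^ (j + 1)) := by
        have hf : ∑ j ∈ range k', (((j + 1 + 1).factorial : ℚ))⁻¹ • z ^ (j + 1)
            = z * ∑ j ∈ range k', (((j + 1 + 1).factorial : ℚ))⁻¹ • z ^ j := by
          rw [Finset.mul_sum]
          refine Finset.sum_congr rfl fun j _ => ?_
          rw [mul_smul_comm, ← pow_succ']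
        rw [hf]
        exact Commute.isNilpotent_mul_right (Commute.all _ _) ⟨_, hz⟩
      rw [hU1]
      exact IsNilpotent.isUnit_one_add hnil
    rw [mul_comm] at hzU
    exact (IsUnit.mul_right_eq_zero hUunit).mp hzU

end Aux

/-- For nilpotent `a, b, c` in a commutative `ℚ`-algebra with
`(1-a)(1-b)(1-c) = 1`, the (finite) logarithm series sum to zero. -/
theorem log_series_sum_eq_zero (A : Type*) [CommRing A] [Algebra ℚ A]
    (a b c : A) (na nb nc : ℕ)
    (ha : a ^ na = 0) (hb : b ^ nb = 0) (hc : c ^ nc = 0)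
    (h : (1 - a) * (1 - b) * (1 - c) = 1) :
    (∑ m ∈ Finset.Icc 1 na, ((m : ℚ)⁻¹) • a ^ m)
      + (∑ m ∈ Finset.Icc 1 nb, ((m : ℚ)⁻¹) • b ^ m)
      + (∑ m ∈ Finset.Icc 1 nc, ((m : ℚ)⁻¹) • c ^ m) = 0 := by
  show clog a na + clog b nb + clog c nc = 0
  set la := clog a na with hladef
  set lb := clog b nb with hlbdef
  set lc := clog c nc with hlcdef
  have hla : la ^ na = 0 := clog_pow_eq_zero ha
  have hlb : lb ^ nb = 0 := clog_pow_eq_zero hb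
  have hlc : lc ^ nc = 0 := clog_pow_eq_zero hc
  obtain ⟨kab, hkab⟩ : IsNilpotent (la + lb) :=
    (Commute.all la lb).isNilpotent_add ⟨na, hla⟩ ⟨nb, hlb⟩
  obtain ⟨ks, hks⟩ : IsNilpotent (la + lb + lc) :=
    (Commute.all _ lc).isNilpotent_add ⟨kab, hkab⟩ ⟨nc, hlc⟩
  set M := na + nb + nc + kab + ks + 1 with hM
  have Ea : cexp la M * (1 - a) = 1 := by
    rw [cexp_ext hla (Nat.le_succ na) (by omega)]
    exact cexp_clog ha
  have Eb : cexp lb M * (1 - b) = 1 := by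
    rw [cexp_ext hlb (Nat.le_succ nb) (by omega)]
    exact cexp_clog hb
  have Ec : cexp lc M * (1 - c) = 1 := by
    rw [cexp_ext hlc (Nat.le_succ nc) (by omega)]
    exact cexp_clog hc
  have hprod : cexp la M * cexp lb M * cexp lc M = 1 := by
    calc cexp la M * cexp lb M * cexp lc M
        = cexp la M * cexp lb M * cexp lc M * ((1 - a) * (1 - b) * (1 - c)) := by
          rw [h, mul_one]
      _ = (cexp la M * (1 - a)) * (cexp lb M * (1 - b)) * (cexp lc M * (1 - c)) := by
          ring
      _ = 1 := by rw [Ea, Eb, Ec, mul_one, mul_one]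
  have h2 : cexp (la + lb) M * cexp lc M = 1 := by
    rw [← cexp_add hla hlb (by omega)]
    exact hprod
  have h3 : cexp (la + lb + lc) M = 1 := by
    rw [← cexp_add hkab hlc (by omega)]
    exact h2
  have h4 : cexp (la + lb + lc) (ks + 1) = 1 := by
    rw [← cexp_ext (n' := M) hks (Nat.le_succ ks) (by omega)]
    exact h3
  exact cexp_eq_one_imp hks h4
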